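/- Let P be a Markov kernel on a measurable space Z with invariant probability measure π, and let ψ : Z → ℝ^d be measurable with all components in L²(π). Define Pg(x) := ∫ g(y) P(x, dy) for scalar g, define Pψ componentwise, and set R := ∫ ψψᵀ dπ and Σ := ∫ [ ∫ (ψ(y) − Pψ(x))(ψ(y) − Pψ(x))ᵀ P(x, dy) ] π(dx). Suppose there is ϱ ∈ [0, 1) with Σ ⪰ (1 − ϱ) R in the positive-semidefinite order. Then for every θ ∈ ℝ^d, the function g = θᵀψ satisfies ‖Pg‖²_{L²(π)} ≤ ϱ ‖g‖²_{L²(π)}; i.e., P acts as a strict L²(π)-contraction on the finite-dimensional subspace H = {θᵀψ : θ ∈ ℝ^d}. -/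

import Mathlib

open MeasureTheory ProbabilityTheory
open scoped ENNReal NNReal

lemma aux_mul_int {α : Type*} [MeasurableSpace α] {μ : Measure α} {p q : α → ℝ}
    (hpm : AEStronglyMeasurable p μ) (hqm : AEStronglyMeasurable q μ)
    (hp2 : Integrable (fun x => (p x)^2) μ) (hq2 : Integrable (fun x => (q x)^2) μ) :
    Integrable (fun x => p x * q x) μ := by
  refine Integrable.mono' ((hp2.add hq2).div_const 2) (hpm.mul hqm)
    (Filter.Eventually.of_forall fun x => ?_)
  rw [Real.norm_eq_abs, abs_mul]
  simp only [Pi.add_apply]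
  nlinarith [sq_nonneg (|p x| - |q x|), sq_abs (p x), sq_abs (q x)]

lemma aux_var {α : Type*} [MeasurableSpace α] (μ : Measure α) [IsProbabilityMeasure μ]
    {f : α → ℝ} (hf : Integrable f μ) (hf2 : Integrable (fun y => (f y)^2) μ) (c : ℝ) :
    ∫ y, (f y - c)^2 ∂μ = ∫ y, (f y)^2 ∂μ - 2*c*(∫ y, f y ∂μ) + c^2 := by
  have h : (fun y => (f y - c)^2) = fun y => ((f y)^2 - (2*c) * f y) + c^2 := by
    funext y; ring
  have h1 : Integrable (fun y => (f y)^2 - (2*c) * f y) μ := hf2.sub (hf.const_mul (2*c))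
  rw [h, integral_add h1 (integrable_const _),
      integral_sub hf2 (hf.const_mul (2*c)), integral_const_mul, integral_const]
  simp [measure_univ]

lemma aux_sq_sub {α : Type*} [MeasurableSpace α] {μ : Measure α} [IsFiniteMeasure μ] {f : α → ℝ}
    (hf : Integrable f μ) (hf2 : Integrable (fun y => (f y)^2) μ) (a : ℝ) :
    Integrable (fun y => (f y - a)^2) μ := by
  have h : (fun y => (f y - a)^2) = fun y => ((f y)^2 - (2*a) * f y) + a^2 := by
    funext y; ring
  rw [h]
  exact (hf2.sub (hf.const_mul (2*a))).add (integrable_const _)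


/-- If the steady-state conditional covariance `Σ` of the features
dominates `(1−ϱ)R` in the positive-semidefinite order, then the Markov kernel `P`
is a strict `L²(π)`-contraction (with constant `ϱ`) on the span of the features. -/
theorem stmt_9
    {Z : Type*} [MeasurableSpace Z]
    (P : Kernel Z Z) [IsMarkovKernel P]
    (π : Measure Z) [IsProbabilityMeasure π]
    (hinv : ∀ A : Set Z, MeasurableSet A → ∫⁻ x, P x A ∂π = π A)
    {d : ℕ}
    (ψ : Z → Fin d → ℝ) (hψ : Measurable ψ)
    (hL2 : ∀ i, Integrable (fun x => (ψ x i) ^ 2) π)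
    (Pψ : Z → Fin d → ℝ)
    (hPψ : ∀ x i, Pψ x i = ∫ y, ψ y i ∂(P x))
    (R Sig : Matrix (Fin d) (Fin d) ℝ)
    (hR : ∀ i j, R i j = ∫ x, ψ x i * ψ x j ∂π)
    (hSig : ∀ i j,
      Sig i j = ∫ x, (∫ y, (ψ y i - Pψ x i) * (ψ y j - Pψ x j) ∂(P x)) ∂π)
    (ϱ : ℝ) (hϱ0 : 0 ≤ ϱ) (hϱ1 : ϱ < 1)
    (hPSD : (Sig - (1 - ϱ) • R).PosSemidef) :
    ∀ θ : Fin d → ℝ,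
      ∫ x, (∫ y, (∑ i, θ i * ψ y i) ∂(P x)) ^ 2 ∂π ≤
        ϱ * ∫ x, (∑ i, θ i * ψ x i) ^ 2 ∂π := by
  intro θ
  classical
  have hψi : ∀ i, Measurable fun x => ψ x i := fun i => (measurable_pi_apply i).comp hψ
  set g : Z → ℝ := fun x => ∑ i, θ i * ψ x i with hg_def
  have hgm : Measurable g := Finset.measurable_sum _ fun i _ => (hψi i).const_mul (θ i)
  -- invariance as a bind identity
  have hbind : π.bind ⇑P = π := by
    ext A hA
    rw [Measure.bind_apply hA P.measurable.aemeasurable]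
    exact hinv A hA
  have hLT : ∀ {f : Z → ℝ≥0∞}, Measurable f →
      ∫⁻ x, ∫⁻ y, f y ∂(P x) ∂π = ∫⁻ y, f y ∂π := fun {f} hf => by
    conv_rhs => rw [← hbind]
    exact (Measure.lintegral_bind P.measurable.aemeasurable hf.aemeasurable).symm
  -- integrability of products under π
  have hψij : ∀ i j, Integrable (fun x => ψ x i * ψ x j) π := fun i j =>
    aux_mul_int (hψi i).aestronglyMeasurable (hψi j).aestronglyMeasurable (hL2 i) (hL2 j)
  have hg_sq_eq : ∀ x : Z, (g x)^2 = ∑ i, ∑ j, (θ i * θ j) * (ψ x i * ψ x j) := by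
    intro x
    rw [sq, hg_def, Finset.sum_mul_sum]
    exact Finset.sum_congr rfl fun i _ => Finset.sum_congr rfl fun j _ => by ring
  have hgsq_expand : ∀ {μ : Measure Z}, (∀ i j, Integrable (fun x => ψ x i * ψ x j) μ) →
      Integrable (fun x => (g x)^2) μ := by
    intro μ hμ
    have h : (fun x => (g x)^2) = fun x => ∑ i, ∑ j, (θ i * θ j) * (ψ x i * ψ x j) :=
      funext hg_sq_eq
    rw [h]
    exact integrable_finset_sum _ fun i _ =>
      integrable_finset_sum _ fun j _ => (hμ i j).const_mul _
  have hg2 : Integrable (fun x => (g x)^2) π := hgsq_expand hψij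
  -- conditional second-moment functions
  set L : Fin d → Z → ℝ≥0∞ := fun i x => ∫⁻ y, ENNReal.ofReal ((ψ y i)^2) ∂(P x) with hL_def
  have hLm : ∀ i, Measurable (L i) := fun i =>
    (Measure.measurable_lintegral ((hψi i).pow_const 2).ennreal_ofReal).comp P.measurable
  have hLfin : ∀ i, ∫⁻ x, L i x ∂π ≠ ⊤ := by
    intro i
    rw [hLT ((hψi i).pow_const 2).ennreal_ofReal]
    exact ((hasFiniteIntegral_iff_ofReal (Filter.Eventually.of_forall fun x => sq_nonneg _)).mp
      (hL2 i).hasFiniteIntegral).ne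
  have hLint : ∀ i, Integrable (fun x => (L i x).toReal) π := fun i =>
    integrable_toReal_of_lintegral_ne_top (hLm i).aemeasurable (hLfin i)
  set Lg : Z → ℝ≥0∞ := fun x => ∫⁻ y, ENNReal.ofReal ((g y)^2) ∂(P x) with hLg_def
  have hLgm : Measurable Lg :=
    (Measure.measurable_lintegral (hgm.pow_const 2).ennreal_ofReal).comp P.measurable
  have hLgfin : ∫⁻ x, Lg x ∂π ≠ ⊤ := by
    rw [hLT (hgm.pow_const 2).ennreal_ofReal]
    exact ((hasFiniteIntegral_iff_ofReal (Filter.Eventually.of_forall fun x => sq_nonneg _)).mp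
      hg2.hasFiniteIntegral).ne
  have hLgint : Integrable (fun x => (Lg x).toReal) π :=
    integrable_toReal_of_lintegral_ne_top hLgm.aemeasurable hLgfin
  -- measurability of the kernel integrals
  have hPgm : StronglyMeasurable fun x => ∫ y, g y ∂(P x) :=
    StronglyMeasurable.integral_kernel_prod_right (κ := P) (f := fun _ y => g y)
      ((show Measurable (Function.uncurry fun (_ : Z) y => g y) from
        hgm.comp measurable_snd).stronglyMeasurable)
  have hPψm : ∀ i, Measurable fun x => Pψ x i := by
    intro i
    have h : (fun x => Pψ x i) = fun x => ∫ y, ψ y i ∂(P x) := funext fun x => hPψ x i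
    rw [h]
    exact (StronglyMeasurable.integral_kernel_prod_right (κ := P) (f := fun _ y => ψ y i)
      ((show Measurable (Function.uncurry fun (_ : Z) y => ψ y i) from
        (hψi i).comp measurable_snd).stronglyMeasurable)).measurable
  have hcm : ∀ i j, StronglyMeasurable
      fun x => ∫ y, (ψ y i - Pψ x i) * (ψ y j - Pψ x j) ∂(P x) := by
    intro i j
    exact StronglyMeasurable.integral_kernel_prod_right (κ := P)
      (f := fun x y => (ψ y i - Pψ x i) * (ψ y j - Pψ x j))
      ((show Measurable (Function.uncurry
          fun (x : Z) y => (ψ y i - Pψ x i) * (ψ y j - Pψ x j)) from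
        (((hψi i).comp measurable_snd).sub ((hPψm i).comp measurable_fst)).mul
          ((((hψi j).comp measurable_snd)).sub
            ((hPψm j).comp measurable_fst))).stronglyMeasurable)
  -- the a.e. pointwise facts
  have hLae : ∀ᵐ x ∂π, ∀ i, L i x < ⊤ := ae_all_iff.mpr fun i => ae_lt_top (hLm i) (hLfin i)
  have hLgae : ∀ᵐ x ∂π, Lg x < ⊤ := ae_lt_top hLgm hLgfin
  have main : ∀ᵐ x ∂π,
      (∫ y, (g y - ∫ y', g y' ∂(P x))^2 ∂(P x) = (Lg x).toReal - (∫ y, g y ∂(P x))^2)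
      ∧ ((∫ y, g y ∂(P x))^2 ≤ (Lg x).toReal)
      ∧ (∀ i j, |∫ y, (ψ y i - Pψ x i) * (ψ y j - Pψ x j) ∂(P x)|
          ≤ ((L i x).toReal + (L j x).toReal)/2)
      ∧ (∑ i, ∑ j, (θ i * θ j) * ∫ y, (ψ y i - Pψ x i) * (ψ y j - Pψ x j) ∂(P x)
          = ∫ y, (g y - ∫ y', g y' ∂(P x))^2 ∂(P x)) := by
    filter_upwards [hLae, hLgae] with x hx hxg
    have hsq : ∀ i, Integrable (fun y => (ψ y i)^2) (P x) := fun i =>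
      ⟨((hψi i).pow_const 2).aestronglyMeasurable,
        (hasFiniteIntegral_iff_ofReal (Filter.Eventually.of_forall fun _ => sq_nonneg _)).mpr (hx i)⟩
    have hint : ∀ i, Integrable (fun y => ψ y i) (P x) := fun i =>
      ((memLp_two_iff_integrable_sq (hψi i).aestronglyMeasurable).mpr (hsq i)).integrable one_le_two
    have hprod : ∀ i j, Integrable (fun y => ψ y i * ψ y j) (P x) := fun i j =>
      aux_mul_int (hψi i).aestronglyMeasurable (hψi j).aestronglyMeasurable (hsq i) (hsq j)
    have hgint : Integrable g (P x) := integrable_finset_sum _ fun i _ => (hint i).const_mul _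
    have hg2x : Integrable (fun y => (g y)^2) (P x) := hgsq_expand hprod
    have hg2val : ∫ y, (g y)^2 ∂(P x) = (Lg x).toReal := by
      rw [integral_eq_lintegral_of_nonneg_ae (Filter.Eventually.of_forall fun y => sq_nonneg _)
        (hgm.pow_const 2).aestronglyMeasurable]
    have hψval : ∀ i, ∫ y, (ψ y i)^2 ∂(P x) = (L i x).toReal := fun i => by
      rw [integral_eq_lintegral_of_nonneg_ae (Filter.Eventually.of_forall fun y => sq_nonneg _)
        ((hψi i).pow_const 2).aestronglyMeasurable]
    -- variance identity for g
    have hvarg : ∫ y, (g y - ∫ y', g y' ∂(P x))^2 ∂(P x)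
        = (Lg x).toReal - (∫ y, g y ∂(P x))^2 := by
      rw [aux_var (P x) hgint hg2x _, hg2val]; ring
    refine ⟨hvarg, ?_, ?_, ?_⟩
    · have h0 : 0 ≤ ∫ y, (g y - ∫ y', g y' ∂(P x))^2 ∂(P x) :=
        integral_nonneg fun y => sq_nonneg _
      linarith [hvarg ▸ h0]
    · -- bound on covariance entries
      intro i j
      have hPψsq : ∀ k, Integrable (fun y => (ψ y k - Pψ x k)^2) (P x) := fun k =>
        aux_sq_sub (hint k) (hsq k) _
      have hPψval : ∀ k, ∫ y, (ψ y k - Pψ x k)^2 ∂(P x) ≤ (L k x).toReal := fun k => by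
        rw [aux_var (P x) (hint k) (hsq k) _, hψval k, ← hPψ x k]
        nlinarith [sq_nonneg (Pψ x k)]
      have hpq : Integrable (fun y => (ψ y i - Pψ x i) * (ψ y j - Pψ x j)) (P x) :=
        aux_mul_int ((hψi i).sub measurable_const).aestronglyMeasurable
          ((hψi j).sub measurable_const).aestronglyMeasurable (hPψsq i) (hPψsq j)
      calc |∫ y, (ψ y i - Pψ x i) * (ψ y j - Pψ x j) ∂(P x)|
          ≤ ∫ y, |(ψ y i - Pψ x i) * (ψ y j - Pψ x j)| ∂(P x) := by
            simpa only [Real.norm_eq_abs] using norm_integral_le_integral_norm (μ := P x)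
              (fun y => (ψ y i - Pψ x i) * (ψ y j - Pψ x j))
        _ ≤ ∫ y, ((ψ y i - Pψ x i)^2 + (ψ y j - Pψ x j)^2)/2 ∂(P x) := by
            refine integral_mono hpq.abs (((hPψsq i).add (hPψsq j)).div_const 2) fun y => ?_
            rw [abs_mul]
            nlinarith [sq_nonneg (|ψ y i - Pψ x i| - |ψ y j - Pψ x j|),
              sq_abs (ψ y i - Pψ x i), sq_abs (ψ y j - Pψ x j)]
        _ = ((∫ y, (ψ y i - Pψ x i)^2 ∂(P x)) + ∫ y, (ψ y j - Pψ x j)^2 ∂(P x))/2 := by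
            rw [integral_div, integral_add (hPψsq i) (hPψsq j)]
        _ ≤ ((L i x).toReal + (L j x).toReal)/2 := by
            have := hPψval i; have := hPψval j; linarith
    · -- the quadratic-form expansion of the conditional variance
      have hc : ∫ y, g y ∂(P x) = ∑ i, θ i * Pψ x i := by
        rw [hg_def]
        rw [integral_finset_sum _ fun i _ => (hint i).const_mul _]
        exact Finset.sum_congr rfl fun i _ => by rw [integral_const_mul, hPψ x i]
      have hptwise : ∀ y, (g y - ∫ y', g y' ∂(P x))^2
          = ∑ i, ∑ j, (θ i * θ j) * ((ψ y i - Pψ x i) * (ψ y j - Pψ x j)) := by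
        intro y
        have : g y - ∫ y', g y' ∂(P x) = ∑ i, θ i * (ψ y i - Pψ x i) := by
          rw [hc, hg_def, ← Finset.sum_sub_distrib]
          exact Finset.sum_congr rfl fun i _ => by ring
        rw [this, sq, Finset.sum_mul_sum]
        exact Finset.sum_congr rfl fun i _ => Finset.sum_congr rfl fun j _ => by ring
      have hterm : ∀ i j, Integrable (fun y => (ψ y i - Pψ x i) * (ψ y j - Pψ x j)) (P x) :=
        fun i j => aux_mul_int ((hψi i).sub measurable_const).aestronglyMeasurable
          ((hψi j).sub measurable_const).aestronglyMeasurable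
          (aux_sq_sub (hint i) (hsq i) _) (aux_sq_sub (hint j) (hsq j) _)
      rw [show (fun y => (g y - ∫ y', g y' ∂(P x))^2)
          = fun y => ∑ i, ∑ j, (θ i * θ j) * ((ψ y i - Pψ x i) * (ψ y j - Pψ x j)) from
          funext hptwise]
      rw [integral_finset_sum _ fun i _ => integrable_finset_sum _ fun j _ =>
        (hterm i j).const_mul _]
      exact (Finset.sum_congr rfl fun i _ => by
        rw [integral_finset_sum _ fun j _ => (hterm i j).const_mul _]
        exact Finset.sum_congr rfl fun j _ => by rw [integral_const_mul]).symm
  -- integrability of the covariance entries over π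
  have hcint : ∀ i j, Integrable
      (fun x => ∫ y, (ψ y i - Pψ x i) * (ψ y j - Pψ x j) ∂(P x)) π := by
    intro i j
    refine Integrable.mono' (((hLint i).add (hLint j)).div_const 2)
      (hcm i j).aestronglyMeasurable ?_
    filter_upwards [main] with x hx
    rw [Real.norm_eq_abs]
    simpa using hx.2.2.1 i j
  -- the quadratic form of Σ
  have hVint_eq : ∫ x, (∫ y, (g y - ∫ y', g y' ∂(P x))^2 ∂(P x)) ∂π
      = ∑ i, ∑ j, (θ i * θ j) * Sig i j := by
    rw [← integral_congr_ae (main.mono fun x hx => hx.2.2.2)]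
    rw [integral_finset_sum _ fun i _ => integrable_finset_sum _ fun j _ =>
      (hcint i j).const_mul _]
    refine Finset.sum_congr rfl fun i _ => ?_
    rw [integral_finset_sum _ fun j _ => (hcint i j).const_mul _]
    exact Finset.sum_congr rfl fun j _ => by rw [integral_const_mul, hSig i j]
  have hPg2int : Integrable (fun x => (∫ y, g y ∂(P x))^2) π := by
    refine Integrable.mono' hLgint
      ((hPgm.measurable.pow_const 2).aestronglyMeasurable) ?_
    filter_upwards [main] with x hx
    rw [Real.norm_eq_abs, abs_of_nonneg (sq_nonneg _)]
    exact hx.2.1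
  have hLgval : ∫ x, (Lg x).toReal ∂π = ∫ x, (g x)^2 ∂π := by
    rw [integral_toReal hLgm.aemeasurable hLgae,
      integral_eq_lintegral_of_nonneg_ae (Filter.Eventually.of_forall fun y => sq_nonneg _)
        (hgm.pow_const 2).aestronglyMeasurable]
    congr 1
    exact hLT (hgm.pow_const 2).ennreal_ofReal
  have hSigQF : ∑ i, ∑ j, (θ i * θ j) * Sig i j
      = ∫ x, (g x)^2 ∂π - ∫ x, (∫ y, g y ∂(P x))^2 ∂π := by
    rw [← hVint_eq, integral_congr_ae (main.mono fun x hx => hx.1),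
      integral_sub hLgint hPg2int, hLgval]
  -- the quadratic form of R
  have hRQF : ∑ i, ∑ j, (θ i * θ j) * R i j = ∫ x, (g x)^2 ∂π := by
    rw [show (fun x => (g x)^2) = fun x => ∑ i, ∑ j, (θ i * θ j) * (ψ x i * ψ x j) from
      funext hg_sq_eq]
    rw [integral_finset_sum _ fun i _ => integrable_finset_sum _ fun j _ =>
      (hψij i j).const_mul _]
    refine Finset.sum_congr rfl fun i _ => ?_
    rw [integral_finset_sum _ fun j _ => (hψij i j).const_mul _]
    exact Finset.sum_congr rfl fun j _ => by rw [integral_const_mul, hR i j]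
  -- the PSD hypothesis
  have hq : (0:ℝ) ≤ ∑ i, θ i * ∑ j, (Sig i j - (1-ϱ) * R i j) * θ j := by
    simpa [dotProduct, Matrix.mulVec, Matrix.sub_apply, Matrix.smul_apply,
      smul_eq_mul] using hPSD.dotProduct_mulVec_nonneg θ
  have hexp : ∑ i, θ i * ∑ j, (Sig i j - (1-ϱ) * R i j) * θ j
      = (∑ i, ∑ j, (θ i * θ j) * Sig i j) - (1-ϱ) * ∑ i, ∑ j, (θ i * θ j) * R i j := by
    rw [Finset.mul_sum]
    rw [← Finset.sum_sub_distrib]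
    refine Finset.sum_congr rfl fun i _ => ?_
    rw [Finset.mul_sum, Finset.mul_sum, ← Finset.sum_sub_distrib]
    refine Finset.sum_congr rfl fun j _ => by ring
  rw [hexp] at hq
  rw [hSigQF, hRQF] at hq
  show ∫ x, (∫ y, g y ∂(P x))^2 ∂π ≤ ϱ * ∫ x, (g x)^2 ∂π
  linarith [hq]
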